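/- Let G be an abelian group and g ∈ G a nonzero element such that for all proper subgroups H, K of G, g ∈ H + K implies g ∈ H or g ∈ K. Then g has finite order, and the order of g is a power of a prime number. -/

import Mathlib

theorem stmt4 {G : Type} [AddCommGroup G] (g : G) (hg : g ≠ 0)
    (hbase : ∀ H K : AddSubgroup G, H ≠ ⊤ → K ≠ ⊤ → g ∈ H ⊔ K → g ∈ H ∨ g ∈ K) :
    0 < addOrderOf g ∧ IsPrimePow (addOrderOf g) := by
  -- helper: membership in sup of zmultiples from a Bezout identity
  have hsup : ∀ (a b u v : ℤ), u * a + v * b = 1 →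
      g ∈ AddSubgroup.zmultiples (a • g) ⊔ AddSubgroup.zmultiples (b • g) := by
    intro a b u v huv
    have : g = u • (a • g) + v • (b • g) := by
      rw [smul_smul, smul_smul, ← add_smul, huv, one_smul]
    have hm := AddSubgroup.add_mem_sup (AddSubgroup.zsmul_mem_zmultiples (a • g) u)
      (AddSubgroup.zsmul_mem_zmultiples (b • g) v)
    rwa [← this] at hm
  -- helper: membership in zmultiples (a • g) gives an equation
  have hmem : ∀ a : ℤ, g ∈ AddSubgroup.zmultiples (a • g) →
      ∃ k : ℤ, (k * a - 1) • g = 0 := by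
    intro a ha
    obtain ⟨k, hk⟩ := AddSubgroup.mem_zmultiples_iff.mp ha
    exact ⟨k, by rw [sub_smul, mul_smul, hk, one_smul, sub_self]⟩
  -- finite order
  have hfin : IsOfFinAddOrder g := by
    by_contra hinf
    have key : ∀ a : ℤ, 1 < a → g ∉ AddSubgroup.zmultiples (a • g) := by
      intro a ha hga
      obtain ⟨k, hk⟩ := hmem a hga
      rcases eq_or_ne (k * a - 1) 0 with h0 | h0
      · have hka : a * k = 1 := by rw [mul_comm]; omega
        rcases Int.isUnit_iff.mp (IsUnit.of_mul_eq_one (a := a) k hka) with h | h <;> omega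
      · exact hinf (isOfFinAddOrder_iff_zsmul_eq_zero.mpr ⟨_, h0, hk⟩)
    have h2 : (AddSubgroup.zmultiples ((2 : ℤ) • g)) ≠ ⊤ := fun h =>
      key 2 (by norm_num) (h ▸ AddSubgroup.mem_top g)
    have h3 : (AddSubgroup.zmultiples ((3 : ℤ) • g)) ≠ ⊤ := fun h =>
      key 3 (by norm_num) (h ▸ AddSubgroup.mem_top g)
    rcases hbase _ _ h2 h3 (hsup 2 3 (-1) 1 (by ring)) with h | h
    · exact key 2 (by norm_num) h
    · exact key 3 (by norm_num) h
  have hpos : 0 < addOrderOf g := hfin.addOrderOf_pos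
  refine ⟨hpos, ?_⟩
  set n := addOrderOf g with hn
  have hn1 : n ≠ 1 := fun h => hg (AddMonoid.addOrderOf_eq_one_iff.mp h)
  by_contra hnp
  set p := n.minFac with hp
  have hpp : p.Prime := Nat.minFac_prime hn1
  set a := p ^ n.factorization p with ha
  set b := ordCompl[p] n with hb
  have hpd : p ∣ n := Nat.minFac_dvd n
  have hab : a * b = n := Nat.ordProj_mul_ordCompl_eq_self n p
  have hcop : Nat.Coprime a b :=
    (Nat.coprime_ordCompl hpp (by omega)).pow_left _
  have hfpos : 0 < n.factorization p :=
    Nat.Prime.factorization_pos_of_dvd hpp (by omega) hpd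
  have ha1 : a ≠ 1 := (Nat.one_lt_pow hfpos.ne' hpp.one_lt).ne'
  have hb1 : b ≠ 1 := by
    intro h
    have hna : n = a := by rw [← hab, h, mul_one]
    exact hnp ⟨p, n.factorization p, hpp.prime, hfpos, by rw [← ha, ← hna]⟩
  -- if m ∣ n and m ≠ 1 then g ∉ zmultiples (m • g)
  have hdvd : ∀ m : ℕ, m ∣ n → m ≠ 1 → g ∉ AddSubgroup.zmultiples ((m : ℤ) • g) := by
    intro m hm hm1 hgm
    obtain ⟨k, hk⟩ := hmem (m : ℤ) hgm
    have hdn : (n : ℤ) ∣ (k * m - 1) := addOrderOf_dvd_iff_zsmul_eq_zero.mpr hk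
    have hmn : (m : ℤ) ∣ (n : ℤ) := Int.natCast_dvd_natCast.mpr hm
    have h1 : (m : ℤ) ∣ 1 := by
      have := (Dvd.dvd.mul_left (dvd_refl (m : ℤ)) k).sub (hmn.trans hdn)
      simpa using this
    have := Int.eq_one_of_dvd_one (by positivity) h1
    exact hm1 (by exact_mod_cast this)
  have hA : AddSubgroup.zmultiples ((a : ℤ) • g) ≠ ⊤ := fun h =>
    hdvd a ⟨b, hab.symm⟩ ha1 (h ▸ AddSubgroup.mem_top g)
  have hB : AddSubgroup.zmultiples ((b : ℤ) • g) ≠ ⊤ := fun h =>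
    hdvd b ⟨a, by rw [← hab, mul_comm]⟩ hb1 (h ▸ AddSubgroup.mem_top g)
  obtain ⟨u, v, huv⟩ := Nat.isCoprime_iff_coprime.mpr hcop
  rcases hbase _ _ hA hB (hsup a b u v huv) with h | h
  · exact hdvd a ⟨b, hab.symm⟩ ha1 h
  · exact hdvd b ⟨a, by rw [← hab, mul_comm]⟩ hb1 h
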